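/- Every quasi-subterm of a normalized term is normalized: if s ∈ sub(⌈t⌉) then s = ⌈s⌉. -/

import Mathlib

inductive BinOp : Type
  | enc | aenc | pair | sig
deriving DecidableEq

inductive Term : Type
  | atom : ℕ → Term
  | var  : ℕ → Term
  | bin  : BinOp → Term → Term → Term
  | priv : Term → Term
  | aci  : List Term → Term

def Term.subst (σ : ℕ → Term) : Term → Term
  | .atom a => .atom a
  | .var x => σ x
  | .bin o p q => .bin o (p.subst σ) (q.subst σ)
  | .priv t => .priv (t.subst σ)
  | .aci L => .aci (L.attach.map fun p => p.1.subst σ)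
decreasing_by
  all_goals simp_wf
  all_goals first
    | omega
    | (have := List.sizeOf_lt_of_mem p.2; omega)

def Term.elems : Term → Set Term
  | .aci L => ⋃ p ∈ L.attach, p.1.elems
  | t => {t}
decreasing_by
  have := List.sizeOf_lt_of_mem p.2; simp_wf; omega

def Term.subDag : Term → Set Term
  | .atom a => {.atom a}
  | .var x => {.var x}
  | .bin o p q => insert (.bin o p q) (p.subDag ∪ q.subDag)
  | .priv t => insert (.priv t) t.subDag
  | .aci L => insert (.aci L) (⋃ p ∈ L.attach, p.1.subDag)
decreasing_by
  all_goals simp_wf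
  all_goals first
    | omega
    | (have := List.sizeOf_lt_of_mem p.2; omega)

def Term.vars (t : Term) : Set ℕ := {x | Term.var x ∈ t.subDag}

def Term.Ground (t : Term) : Prop := t.vars = ∅

/-- Specification of the quasi-subterm function `sub`. -/
structure SubSpec where
  sub : Term → Set Term
  sub_atom : ∀ a, sub (.atom a) = {.atom a}
  sub_var : ∀ x, sub (.var x) = {.var x}
  sub_priv : ∀ t, sub (.priv t) = insert (.priv t) (sub t)
  sub_bin : ∀ o p q, sub (.bin o p q) = insert (.bin o p q) (sub p ∪ sub q)
  sub_aci : ∀ L, sub (.aci L) = insert (.aci L) (⋃ p ∈ (Term.aci L).elems, sub p)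

/-- Specification of the ACI normal form with respect to a strict total order `lt`. -/
structure NormSpec (lt : Term → Term → Prop) where
  nf : Term → Term
  nf_atom : ∀ a, nf (.atom a) = .atom a
  nf_var  : ∀ x, nf (.var x) = .var x
  nf_bin  : ∀ o p q, nf (.bin o p q) = .bin o (nf p) (nf q)
  nf_priv : ∀ t, nf (.priv t) = .priv (nf t)
  nf_aci_single : ∀ L t', nf '' (Term.aci L).elems = {t'} → nf (.aci L) = t'
  nf_aci : ∀ L, (¬ ∃ t', nf '' (Term.aci L).elems = {t'}) →
      ∃ L' : List Term, List.Pairwise lt L' ∧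
        (∀ s, s ∈ L' ↔ s ∈ nf '' (Term.aci L).elems) ∧ nf (.aci L) = .aci L'

/-- The derivable closure of a set `E` of terms under a deduction system `R`,
given as a set of rules (premises, conclusion): the least superset of `E`
closed under the rules. -/
inductive Der (R : Set (Set Term × Term)) (E : Set Term) : Term → Prop where
  | base {t : Term} : t ∈ E → Der R E t
  | step {l : Set Term} {r : Term} : (l, r) ∈ R → (∀ s ∈ l, Der R E s) → Der R E r

/-- The composition rules of the DY+ACI deduction system (for normal form `nf`). -/
inductive DYComp (nf : Term → Term) : Set Term → Term → Prop where
  | enc  (t₁ t₂ : Term) : DYComp nf {t₁, t₂} (nf (.bin .enc t₁ t₂))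
  | aenc (t₁ t₂ : Term) : DYComp nf {t₁, t₂} (nf (.bin .aenc t₁ t₂))
  | pair (t₁ t₂ : Term) : DYComp nf {t₁, t₂} (nf (.bin .pair t₁ t₂))
  | sig  (t₁ t₂ : Term) : DYComp nf {t₁, .priv t₂} (nf (.bin .sig t₁ (.priv t₂)))
  | aci  (L : List Term) (h : L ≠ []) : DYComp nf {t | t ∈ L} (nf (.aci L))

/-- The composition rules of DY+ACI other than the ACI-set construction rule. -/
inductive DYCompNoACI (nf : Term → Term) : Set Term → Term → Prop where
  | enc  (t₁ t₂ : Term) : DYCompNoACI nf {t₁, t₂} (nf (.bin .enc t₁ t₂))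
  | aenc (t₁ t₂ : Term) : DYCompNoACI nf {t₁, t₂} (nf (.bin .aenc t₁ t₂))
  | pair (t₁ t₂ : Term) : DYCompNoACI nf {t₁, t₂} (nf (.bin .pair t₁ t₂))
  | sig  (t₁ t₂ : Term) : DYCompNoACI nf {t₁, .priv t₂} (nf (.bin .sig t₁ (.priv t₂)))

/-- The decomposition rules of the DY+ACI deduction system. -/
inductive DYDecomp (nf : Term → Term) : Set Term → Term → Prop where
  | enc  (t₁ t₂ : Term) : DYDecomp nf {.bin .enc t₁ t₂, nf t₂} (nf t₁)
  | aenc (t₁ t₂ : Term) : DYDecomp nf {.bin .aenc t₁ t₂, nf (.priv t₂)} (nf t₁)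
  | fst  (t₁ t₂ : Term) : DYDecomp nf {.bin .pair t₁ t₂} (nf t₁)
  | snd  (t₁ t₂ : Term) : DYDecomp nf {.bin .pair t₁ t₂} (nf t₂)
  | aci  (L : List Term) (t : Term) (h : t ∈ L) : DYDecomp nf {.aci L} (nf t)

/-- The DY+ACI deduction system as a set of rules. -/
def DYACI (nf : Term → Term) : Set (Set Term × Term) :=
  {p | DYComp nf p.1 p.2 ∨ DYDecomp nf p.1 p.2}

/-- A ground substitution `σ` is a model of a constraint system
`S = {Eᵢ ▷ tᵢ}` if `⌈tᵢσ⌉` is derivable from `⌈Eᵢσ⌉` in DY+ACI. -/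
def Models (nf : Term → Term) (σ : ℕ → Term) (S : List (Set Term × Term)) : Prop :=
  ∀ c ∈ S, Der (DYACI nf) (nf '' ((fun t => t.subst σ) '' c.1)) (nf (c.2.subst σ))

/-- All terms occurring in a constraint system. -/
def termsOf (S : List (Set Term × Term)) : Set Term :=
  ⋃ c ∈ S, c.1 ∪ {c.2}

/-- DAG-subterms of a constraint system. -/
def subDagS (S : List (Set Term × Term)) : Set Term :=
  ⋃ t ∈ termsOf S, t.subDag

/-- Variables of a constraint system. -/
def varsS (S : List (Set Term × Term)) : Set ℕ :=
  {x | Term.var x ∈ subDagS S}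

/-- Applying a substitution to a constraint system. -/
def substS (θ : ℕ → Term) (S : List (Set Term × Term)) : List (Set Term × Term) :=
  S.map fun c => ((fun t => t.subst θ) '' c.1, c.2.subst θ)

/-- The domain of a substitution. -/
def dom (θ : ℕ → Term) : Set ℕ := {x | θ x ≠ .var x}

section Aux

/-- `t` is a member of its own quasi-subterms. -/
lemma mem_sub_self (Sp : SubSpec) : ∀ t : Term, t ∈ Sp.sub t := by
  intro t
  cases t with
  | atom a => rw [Sp.sub_atom]; rfl
  | var x => rw [Sp.sub_var]; rfl
  | bin o p q => rw [Sp.sub_bin]; exact Set.mem_insert _ _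
  | priv t => rw [Sp.sub_priv]; exact Set.mem_insert _ _
  | aci L => rw [Sp.sub_aci]; exact Set.mem_insert _ _

/-- Unfolding membership in `elems` of an aci term. -/
lemma mem_elems_aci {L : List Term} {s : Term} :
    s ∈ Term.elems (.aci L) ↔ ∃ q ∈ L, s ∈ q.elems := by
  rw [Term.elems]
  simp

lemma elems_of_not_aci {t : Term} (h : ∀ M, t ≠ .aci M) : t.elems = {t} := by
  cases t with
  | aci L => exact absurd rfl (h L)
  | atom a => rw [Term.elems]; intro L h'; simp at h'
  | var x => rw [Term.elems]; intro L h'; simp at h'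
  | bin o p q => rw [Term.elems]; intro L h'; simp at h'
  | priv t => rw [Term.elems]; intro L h'; simp at h'

/-- Members of `elems` are never aci terms. -/
lemma elems_not_aci : ∀ t : Term, ∀ s ∈ t.elems, ∀ M, s ≠ .aci M := by
  intro t
  induction t using Term.elems.induct with
  | case1 L ih =>
    intro s hs M
    rw [mem_elems_aci] at hs
    obtain ⟨q, hq, hsq⟩ := hs
    exact ih ⟨q, hq⟩ s hsq M
  | case2 t h =>
    rw [elems_of_not_aci (by intro M hM; exact h M hM)]
    rintro s rfl M
    intro hM
    exact h M hM

/-- Size bound for members of `elems` of an aci term. -/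
lemma elems_aci_size {L : List Term} {s : Term} (hs : s ∈ Term.elems (.aci L)) :
    sizeOf s < sizeOf (Term.aci L) := by
  have key : ∀ t : Term, ∀ s ∈ t.elems, sizeOf s ≤ sizeOf t := by
    intro t
    induction t using Term.elems.induct with
    | case1 L ih =>
      intro s hs
      rw [mem_elems_aci] at hs
      obtain ⟨q, hq, hsq⟩ := hs
      have h1 : sizeOf s ≤ sizeOf q := ih ⟨q, hq⟩ s hsq
      have h2 := List.sizeOf_lt_of_mem hq
      simp only [Term.aci.sizeOf_spec]
      omega
    | case2 t h =>
      rw [elems_of_not_aci (by intro M hM; exact h M hM)]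
      rintro s rfl; exact le_refl _
  rw [mem_elems_aci] at hs
  obtain ⟨q, hq, hsq⟩ := hs
  have h1 := key q s hsq
  have h2 := List.sizeOf_lt_of_mem hq
  simp only [Term.aci.sizeOf_spec]
  omega

/-- `nf` of a non-aci term is non-aci. -/
lemma nf_not_aci {lt : Term → Term → Prop} (N : NormSpec lt) {t : Term}
    (h : ∀ M, t ≠ .aci M) : ∀ M, N.nf t ≠ .aci M := by
  cases t with
  | aci L => exact absurd rfl (h L)
  | atom a => rw [N.nf_atom]; simp
  | var x => rw [N.nf_var]; simp
  | bin o p q => rw [N.nf_bin]; simp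
  | priv t => rw [N.nf_priv]; simp

/-- Two lt-sorted lists with the same members are equal. -/
lemma sorted_eq_of_mem_iff {lt : Term → Term → Prop} (hlt : IsStrictTotalOrder Term lt)
    {l₁ l₂ : List Term} (h₁ : l₁.Pairwise lt) (h₂ : l₂.Pairwise lt)
    (h : ∀ x, x ∈ l₁ ↔ x ∈ l₂) : l₁ = l₂ := by
  have hne : ∀ {a b : Term}, lt a b → a ≠ b := by
    rintro a b hab rfl; exact hlt.irrefl a hab
  have hn₁ : l₁.Nodup := h₁.imp hne
  have hn₂ : l₂.Nodup := h₂.imp hne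
  have hperm : l₁.Perm l₂ := (List.perm_ext_iff_of_nodup hn₁ hn₂).mpr h
  have : IsAntisymm Term lt := ⟨by
    intro a b hab hba
    exact absurd (hlt.trans _ _ _ hab hba) (hlt.irrefl a)⟩
  exact List.Perm.eq_of_pairwise (fun a b _ _ hab hba => this.antisymm a b hab hba) h₁ h₂ hperm

end Aux

/-- Main auxiliary lemma: strong induction on the size of `t`. -/
lemma sub_nf_aux (lt : Term → Term → Prop) (hlt : IsStrictTotalOrder Term lt)
    (N : NormSpec lt) (Sp : SubSpec) :
    ∀ n : ℕ, ∀ t : Term, sizeOf t ≤ n → ∀ s ∈ Sp.sub (N.nf t), s = N.nf s := by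
  intro n
  induction n using Nat.strong_induction_on with
  | _ n ih =>
    intro t ht s hs
    -- key consequence: nf of any strictly smaller term is a fixed point of nf
    have idem : ∀ u : Term, sizeOf u < sizeOf t → N.nf (N.nf u) = N.nf u := by
      intro u hu
      exact (ih (sizeOf u) (by omega) u (le_refl _) (N.nf u) (mem_sub_self Sp _)).symm
    cases t with
    | atom a =>
      rw [N.nf_atom, Sp.sub_atom] at hs
      rw [Set.mem_singleton_iff] at hs
      subst hs; rw [N.nf_atom]
    | var x =>
      rw [N.nf_var, Sp.sub_var] at hs
      rw [Set.mem_singleton_iff] at hs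
      subst hs; rw [N.nf_var]
    | bin o p q =>
      have hp : sizeOf p < sizeOf (Term.bin o p q) := by simp only [Term.bin.sizeOf_spec]; omega
      have hq : sizeOf q < sizeOf (Term.bin o p q) := by simp only [Term.bin.sizeOf_spec]; omega
      rw [N.nf_bin, Sp.sub_bin] at hs
      rcases hs with rfl | hs
      · rw [N.nf_bin, idem p hp, idem q hq]
      · rcases hs with hs | hs
        · exact ih (sizeOf p) (by omega) p (le_refl _) s hs
        · exact ih (sizeOf q) (by omega) q (le_refl _) s hs
    | priv u =>
      have hu : sizeOf u < sizeOf (Term.priv u) := by simp only [Term.priv.sizeOf_spec]; omega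
      rw [N.nf_priv, Sp.sub_priv] at hs
      rcases hs with rfl | hs
      · rw [N.nf_priv, idem u hu]
      · exact ih (sizeOf u) (by omega) u (le_refl _) s hs
    | aci L =>
      -- every member of elems (aci L) is strictly smaller
      have hsize : ∀ q ∈ Term.elems (.aci L), sizeOf q < sizeOf (Term.aci L) :=
        fun q hq => elems_aci_size hq
      -- nf fixes nf of every member of elems (aci L)
      have hfix : ∀ q ∈ Term.elems (.aci L), N.nf (N.nf q) = N.nf q := by
        intro q hq
        exact idem q (by have := hsize q hq; omega)
      by_cases hsing : ∃ t', N.nf '' Term.elems (.aci L) = {t'}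
      · obtain ⟨t', ht'⟩ := hsing
        rw [N.nf_aci_single L t' ht'] at hs
        -- t' = nf q for some q ∈ elems; sub t' = sub (nf q)
        have : t' ∈ N.nf '' Term.elems (.aci L) := by rw [ht']; rfl
        obtain ⟨q, hq, rfl⟩ := this
        exact ih (sizeOf q) (by have := hsize q hq; omega) q (le_refl _) s hs
      · obtain ⟨L', hpw, hmem, heq⟩ := N.nf_aci L hsing
        rw [heq] at hs
        -- members of L' are normalized non-aci terms
        have hL'norm : ∀ p ∈ L', N.nf p = p := by
          intro p hp
          obtain ⟨q, hq, rfl⟩ := (hmem p).mp hp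
          exact hfix q hq
        have hL'nonaci : ∀ p ∈ L', ∀ M, p ≠ .aci M := by
          intro p hp M
          obtain ⟨q, hq, rfl⟩ := (hmem p).mp hp
          exact nf_not_aci N (elems_not_aci _ q hq) M
        -- elems (aci L') = members of L'
        have helems : Term.elems (.aci L') = {p | p ∈ L'} := by
          ext x
          rw [mem_elems_aci]
          constructor
          · rintro ⟨q, hq, hxq⟩
            rw [elems_of_not_aci (hL'nonaci q hq)] at hxq
            rw [Set.mem_singleton_iff] at hxq
            subst hxq; exact hq
          · intro hx
            exact ⟨x, hx, by rw [elems_of_not_aci (hL'nonaci x hx)]; rfl⟩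
        rw [Sp.sub_aci] at hs
        rcases hs with rfl | hs
        · -- s = aci L' : show nf (aci L') = aci L'
          have himg : N.nf '' Term.elems (.aci L') = {p | p ∈ L'} := by
            rw [helems]
            ext x
            constructor
            · rintro ⟨p, hp, rfl⟩
              have := hL'norm p hp
              rw [this]; exact hp
            · intro hx
              exact ⟨x, hx, hL'norm x hx⟩
          have himg2 : N.nf '' Term.elems (.aci L') = N.nf '' Term.elems (.aci L) := by
            rw [himg]
            ext x
            constructor
            · intro hx
              exact (hmem x).mp hx
            · intro hx
              exact (hmem x).mpr hx
          have hnsing : ¬ ∃ t', N.nf '' Term.elems (.aci L') = {t'} := by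
            rw [himg2]; exact hsing
          obtain ⟨L'', hpw'', hmem'', heq''⟩ := N.nf_aci L' hnsing
          have : L'' = L' := by
            apply sorted_eq_of_mem_iff hlt hpw'' hpw
            intro x
            rw [hmem'' x, himg2, ← hmem x]
          rw [heq'', this]
        · rw [Set.mem_iUnion] at hs
          obtain ⟨p, hp⟩ := hs
          rw [Set.mem_iUnion] at hp
          obtain ⟨hpmem, hs⟩ := hp
          rw [helems] at hpmem
          obtain ⟨q, hq, rfl⟩ := (hmem p).mp hpmem
          exact ih (sizeOf q) (by have := hsize q hq; omega) q (le_refl _) s hs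

/-- Every quasi-subterm of a normalized term is normalized. -/
theorem sub_norm_normalized (lt : Term → Term → Prop) (hlt : IsStrictTotalOrder Term lt)
    (N : NormSpec lt) (Sp : SubSpec) :
    ∀ t s : Term, s ∈ Sp.sub (N.nf t) → s = N.nf s := by
  intro t s hs
  exact sub_nf_aux lt hlt N Sp (sizeOf t) t (le_refl _) s hs
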